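/- Let a, b, k ∈ ℂ with k ≠ 0, and define x(w) = a + exp(k·w + b) and y(w) = a - exp(k·w + b) for w ∈ ℂ. Then x - y never vanishes, and the pair (x, y) satisfies the system x''(w) = 2·x'(w)²/(x(w) - y(w)) and y''(w) = -2·y'(w)²/(x(w) - y(w)) for all w ∈ ℂ. -/

import Mathlib

lemma deriv_exp_lin (b k : ℂ) :
    deriv (fun w => Complex.exp (k * w + b)) = fun w => k * Complex.exp (k * w + b) := by
  funext w
  have h : HasDerivAt (fun w : ℂ => Complex.exp (k * w + b))
      (Complex.exp (k * w + b) * k) w := by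
    have h1 : HasDerivAt (fun w : ℂ => k * w + b) k w := by
      simpa using ((hasDerivAt_id w).const_mul k).add_const b
    exact (Complex.hasDerivAt_exp _).comp w h1
  rw [h.deriv]; ring

theorem stmt_9 (a b k : ℂ) (hk : k ≠ 0) :
    let x : ℂ → ℂ := fun w => a + Complex.exp (k * w + b)
    let y : ℂ → ℂ := fun w => a - Complex.exp (k * w + b)
    (∀ w : ℂ, x w - y w ≠ 0) ∧
    (∀ w : ℂ, deriv (deriv x) w = 2 * (deriv x w) ^ 2 / (x w - y w)) ∧
    (∀ w : ℂ, deriv (deriv y) w = -2 * (deriv y w) ^ 2 / (x w - y w)) := by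
  intro x y
  have hx : deriv x = fun w => k * Complex.exp (k * w + b) := by
    have : x = fun w => a + Complex.exp (k * w + b) := rfl
    rw [this]
    funext w
    rw [deriv_const_add]
    exact congrFun (deriv_exp_lin b k) w
  have hy : deriv y = fun w => -(k * Complex.exp (k * w + b)) := by
    funext w
    show deriv (fun w => a - Complex.exp (k * w + b)) w = _
    rw [deriv_const_sub, congrFun (deriv_exp_lin b k) w]
  have hxx : deriv (deriv x) = fun w => k * (k * Complex.exp (k * w + b)) := by
    rw [hx]; funext w
    rw [deriv_const_mul _ (by
      have := (Complex.hasDerivAt_exp (k * w + b)).comp w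
        (by simpa using ((hasDerivAt_id w).const_mul k).add_const b : HasDerivAt (fun w : ℂ => k * w + b) k w)
      exact this.differentiableAt)]
    rw [congrFun (deriv_exp_lin b k) w]
  have hyy : deriv (deriv y) = fun w => -(k * (k * Complex.exp (k * w + b))) := by
    rw [hy]; funext w
    rw [deriv.fun_neg]
    congr 1
    rw [deriv_const_mul _ (by
      have := (Complex.hasDerivAt_exp (k * w + b)).comp w
        (by simpa using ((hasDerivAt_id w).const_mul k).add_const b : HasDerivAt (fun w : ℂ => k * w + b) k w)
      exact this.differentiableAt)]
    rw [congrFun (deriv_exp_lin b k) w]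
  have hsub : ∀ w : ℂ, x w - y w = 2 * Complex.exp (k * w + b) := by
    intro w; show a + _ - (a - _) = _; ring
  have hne : ∀ w : ℂ, x w - y w ≠ 0 := by
    intro w; rw [hsub w]
    exact mul_ne_zero two_ne_zero (Complex.exp_ne_zero _)
  refine ⟨hne, fun w => ?_, fun w => ?_⟩
  · rw [hxx, hx, hsub w]
    field_simp
  · rw [hyy, hy, hsub w]
    field_simp
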